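/- Let G be a connected graph with 2r vertices such that every maximal matching of G has size r (i.e., every maximal matching is perfect). Then G has no cutvertex, i.e., G is 2-connected (for r ≥ 2). -/

import Mathlib

open SimpleGraph

/-- A matching of a simple graph, given as a set of edges: each edge belongs to the
graph, and distinct edges of the matching share no vertex. -/
def EdgeMatching {V : Type*} (G : SimpleGraph V) (M : Set (Sym2 V)) : Prop :=
  M ⊆ G.edgeSet ∧ ∀ e ∈ M, ∀ f ∈ M, e ≠ f → ∀ v : V, v ∈ e → v ∉ f

/-- The set of vertices covered by a set of edges. -/
def mCover {V : Type*} (M : Set (Sym2 V)) : Set V := {v | ∃ e ∈ M, v ∈ e}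

/-- A maximal matching: a matching to which no edge of the graph can be added. -/
def MaximalEdgeMatching {V : Type*} (G : SimpleGraph V) (M : Set (Sym2 V)) : Prop :=
  EdgeMatching G M ∧ ∀ e ∈ G.edgeSet, EdgeMatching G (insert e M) → e ∈ M

lemma edgeMatching_mono {V : Type*} {G : SimpleGraph V} {M N : Set (Sym2 V)}
    (h : M ⊆ N) (hN : EdgeMatching G N) : EdgeMatching G M :=
  ⟨h.trans hN.1, fun e he f hf => hN.2 e (h he) f (h hf)⟩

lemma matching_unique {V : Type*} {G : SimpleGraph V} {M : Set (Sym2 V)}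
    (hM : EdgeMatching G M) {e f : Sym2 V} (he : e ∈ M) (hf : f ∈ M)
    (x : V) (hxe : x ∈ e) (hxf : x ∈ f) : e = f := by
  by_contra h
  exact hM.2 e he f hf h x hxe hxf

lemma exists_maximal_containing {V : Type*} [Finite V] (G : SimpleGraph V)
    {e : Sym2 V} (he : e ∈ G.edgeSet) :
    ∃ M, MaximalEdgeMatching G M ∧ e ∈ M := by
  classical
  set C : Set (Set (Sym2 V)) := {M | EdgeMatching G M ∧ e ∈ M} with hC
  have hfin : C.Finite := Set.toFinite _
  have hne : C.Nonempty := by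
    refine ⟨{e}, ⟨⟨?_, ?_⟩, rfl⟩⟩
    · simpa using he
    · intro a ha b hb hab
      simp only [Set.mem_singleton_iff] at ha hb
      exact absurd (ha.trans hb.symm) hab
  obtain ⟨M, hMC, hMmax'⟩ := hfin.exists_maximal hne
  have hMmax : ∀ a ∈ C, M ⊆ a → M = a := fun a ha h => le_antisymm h (hMmax' ha h)
  refine ⟨M, ⟨hMC.1, ?_⟩, hMC.2⟩
  intro f hf hins
  have h1 : insert f M ∈ C := ⟨hins, Set.mem_insert_of_mem _ hMC.2⟩
  have h2 : M = insert f M := hMmax _ h1 (Set.subset_insert _ _)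
  rw [h2]
  exact Set.mem_insert _ _

lemma cover_ncard {V : Type*} [Finite V] {G : SimpleGraph V} {M : Set (Sym2 V)}
    (hM : EdgeMatching G M) : (mCover M).ncard = 2 * M.ncard := by
  classical
  have key : ∀ s : Set (Sym2 V), s.Finite → EdgeMatching G s →
      (mCover s).ncard = 2 * s.ncard := by
    intro s hs
    refine Set.Finite.induction_on (motive := fun s _ => EdgeMatching G s → (mCover s).ncard = 2 * s.ncard) s hs ?_ ?_
    · intro _
      simp [mCover]
    · intro a s ha hsf ih hmatch
      have hs' : EdgeMatching G s := edgeMatching_mono (Set.subset_insert _ _) hmatch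
      have ha_edge : a ∈ G.edgeSet := hmatch.1 (Set.mem_insert _ _)
      obtain ⟨⟨y, z⟩, rfl⟩ := a.exists_rep
      have hadj : G.Adj y z := by rwa [SimpleGraph.mem_edgeSet] at ha_edge
      have hyz : y ≠ z := hadj.ne
      have hcov : mCover (insert s(y, z) s) = ({y, z} : Set V) ∪ mCover s := by
        ext x
        simp only [mCover, Set.mem_setOf_eq, Set.mem_insert_iff, Set.mem_union,
          Set.mem_singleton_iff]
        constructor
        · rintro ⟨e, (rfl | he), hx⟩
          · left; simpa [Sym2.mem_iff] using hx
          · right; exact ⟨e, he, hx⟩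
        · rintro ((rfl | rfl) | ⟨e, he, hx⟩)
          · exact ⟨s(x, z), Or.inl rfl, by simp⟩
          · exact ⟨s(y, x), Or.inl rfl, by simp⟩
          · exact ⟨e, Or.inr he, hx⟩
      have hdisj : Disjoint ({y, z} : Set V) (mCover s) := by
        rw [Set.disjoint_left]
        rintro x hx ⟨e, he, hxe⟩
        have hxa : x ∈ s(y, z) := by
          rcases hx with rfl | rfl <;> simp
        have hne : s(y, z) ≠ e := by
          rintro rfl; exact ha he
        exact hmatch.2 _ (Set.mem_insert _ _) e (Set.mem_insert_of_mem _ he) hne x hxa hxe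
      rw [hcov, Set.ncard_union_eq hdisj (Set.toFinite _) (Set.toFinite _),
        Set.ncard_pair hyz, ih hs', Set.ncard_insert_of_notMem ha (Set.toFinite _)]
      ring
  exact key M (Set.toFinite _) hM

lemma key_even {V : Type*} [Finite V] {G : SimpleGraph V} {M : Set (Sym2 V)}
    (hM : EdgeMatching G M) (hcov : mCover M = Set.univ)
    {v w : V} (hvw : s(v, w) ∈ M) {S : Set V} (hvS : v ∉ S)
    (hcl : ∀ y ∈ S, ∀ z, G.Adj y z → z ≠ v → z ∈ S) :
    Even ((S \ {w}).ncard) := by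
  classical
  set M' : Set (Sym2 V) := {e ∈ M | ∀ x ∈ e, x ∈ S \ {w}} with hM'def
  have hsub : M' ⊆ M := Set.sep_subset _ _
  have hM'm : EdgeMatching G M' := edgeMatching_mono hsub hM
  have hcov' : mCover M' = S \ {w} := by
    apply Set.Subset.antisymm
    · rintro x ⟨e, ⟨heM, hall⟩, hx⟩
      exact hall x hx
    · rintro y ⟨hyS, hyw⟩
      have hyw' : y ≠ w := by simpa using hyw
      have hyv : y ≠ v := fun h => hvS (h ▸ hyS)
      have hycov : y ∈ mCover M := hcov ▸ Set.mem_univ y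
      obtain ⟨e, heM, hye⟩ := hycov
      obtain ⟨z, rfl⟩ := Sym2.mem_iff_exists.mp hye
      have hzv : z ≠ v := by
        intro hz
        have hve : v ∈ s(y, z) := Sym2.mem_iff.mpr (Or.inr hz.symm)
        have heq : s(y, z) = s(v, w) := matching_unique hM heM hvw v hve (by simp)
        have hy' : y ∈ s(v, w) := heq ▸ (by simp : y ∈ s(y, z))
        rcases Sym2.mem_iff.mp hy' with h | h
        · exact hyv h
        · exact hyw' h
      have hadj : G.Adj y z := by
        have := hM.1 heM
        rwa [SimpleGraph.mem_edgeSet] at this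
      have hzS : z ∈ S := hcl y hyS z hadj hzv
      have hzw : z ≠ w := by
        intro hz
        have hwe : w ∈ s(y, z) := Sym2.mem_iff.mpr (Or.inr hz.symm)
        have heq : s(y, z) = s(v, w) := matching_unique hM heM hvw w hwe (by simp)
        have hy' : y ∈ s(v, w) := heq ▸ (by simp : y ∈ s(y, z))
        rcases Sym2.mem_iff.mp hy' with h | h
        · exact hyv h
        · exact hyw' h
      refine ⟨s(y, z), ⟨heM, ?_⟩, by simp⟩
      intro x hx
      rcases Sym2.mem_iff.mp hx with rfl | rfl
      · exact ⟨hyS, by simp [hyw']⟩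
      · exact ⟨hzS, by simp [hzw]⟩
  have hcard : (S \ {w}).ncard = 2 * M'.ncard := by
    rw [← hcov', cover_ncard hM'm]
  rw [hcard]
  exact even_two_mul _

lemma exists_nbr_aux {V : Type*} (G : SimpleGraph V) {x c : V} (p : G.Walk x c) :
    x ≠ c → ∃ y, ∃ hy : y ≠ c, G.Adj c y ∧
      ∀ hx : x ≠ c, (G.induce {u : V | u ≠ c}).Reachable ⟨x, hx⟩ ⟨y, hy⟩ := by
  induction p with
  | nil => exact fun hx => absurd rfl hx
  | @cons x z c h q ih =>
    intro hx
    by_cases hz : z = c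
    · subst hz
      exact ⟨x, hx, h.symm, fun _ => SimpleGraph.Reachable.refl _⟩
    · obtain ⟨y, hy, hadj, hr⟩ := ih hz
      refine ⟨y, hy, hadj, fun hx' => ?_⟩
      have hadj' : (G.induce {u : V | u ≠ c}).Adj ⟨x, hx'⟩ ⟨z, hz⟩ := by
        simpa using h
      exact hadj'.reachable.trans (hr hz)

/-- a connected graph on 2r vertices (r ≥ 2) in which every maximal
matching has size r has no cutvertex. -/
theorem no_cutvertex_of_all_maximal_matchings_perfect {V : Type*} [Fintype V]
    (G : SimpleGraph V) (r : ℕ) (hr : 2 ≤ r) (hcard : Fintype.card V = 2 * r)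
    (hconn : G.Connected)
    (hmax : ∀ M : Set (Sym2 V), MaximalEdgeMatching G M → M.ncard = r) :
    ∀ v : V, (G.induce {x : V | x ≠ v}).Connected := by
  classical
  intro v
  by_contra hnc
  have hne : Nonempty ({x : V | x ≠ v}) := by
    obtain ⟨b, hb⟩ := Fintype.exists_ne_of_one_lt_card (by omega) v
    exact ⟨⟨b, hb⟩⟩
  haveI := hne
  have hprec : ¬ (G.induce {x : V | x ≠ v}).Preconnected := fun h => hnc ⟨h⟩
  rw [SimpleGraph.Preconnected] at hprec
  push_neg at hprec
  obtain ⟨a, b, hab⟩ := hprec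
  set S : Set V := {y | ∃ h : y ≠ v, (G.induce {x : V | x ≠ v}).Reachable b ⟨y, h⟩} with hSdef
  have hvS : v ∉ S := fun ⟨h, _⟩ => h rfl
  have hcl : ∀ y ∈ S, ∀ z, G.Adj y z → z ≠ v → z ∈ S := by
    rintro y ⟨hy, hr⟩ z hadj hz
    refine ⟨hz, hr.trans ?_⟩
    have hadj' : (G.induce {x : V | x ≠ v}).Adj ⟨y, hy⟩ ⟨z, hz⟩ := by simpa using hadj
    exact hadj'.reachable
  -- neighbor of v reachable from b
  obtain ⟨pb⟩ := hconn.preconnected (↑b) v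
  obtain ⟨wb, hwb, hadjb, hrb⟩ := exists_nbr_aux G pb b.2
  have hwbS : wb ∈ S := ⟨hwb, hrb b.2⟩
  -- neighbor of v reachable from a
  obtain ⟨pa⟩ := hconn.preconnected (↑a) v
  obtain ⟨wa, hwa, hadja, hra⟩ := exists_nbr_aux G pa a.2
  have hwaS : wa ∉ S := by
    rintro ⟨h, hrba⟩
    exact hab ((hra a.2).trans hrba.symm)
  -- the two maximal matchings
  have perfect : ∀ {w : V}, G.Adj v w →
      ∃ M, EdgeMatching G M ∧ mCover M = Set.univ ∧ s(v, w) ∈ M := by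
    intro w hadj
    obtain ⟨M, hM, hmem⟩ := exists_maximal_containing G (G.mem_edgeSet.mpr hadj)
    refine ⟨M, hM.1, ?_, hmem⟩
    have h1 : (mCover M).ncard = 2 * r := by
      rw [cover_ncard hM.1, hmax M hM]
    have h2 : (Set.univ : Set V).ncard = 2 * r := by
      rw [Set.ncard_univ, Nat.card_eq_fintype_card, hcard]
    exact Set.eq_of_subset_of_ncard_le (Set.subset_univ _) (by omega) (Set.toFinite _)
  obtain ⟨Ma, hMa, hcova, hmema⟩ := perfect hadja
  obtain ⟨Mb, hMb, hcovb, hmemb⟩ := perfect hadjb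
  have hEa : Even (S.ncard) := by
    have := key_even hMa hcova hmema hvS hcl
    rwa [Set.diff_singleton_eq_self hwaS] at this
  have hEb : Even ((S \ {wb}).ncard) := key_even hMb hcovb hmemb hvS hcl
  have hS_card : (S \ {wb}).ncard + 1 = S.ncard :=
    Set.ncard_diff_singleton_add_one hwbS (Set.toFinite _)
  rw [← hS_card] at hEa
  exact (Nat.even_add_one.mp hEa) hEb
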